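/- (Poisson operator and the AKNS recursion.) Let a ∈ u(n) be a fixed diagonal matrix, let u : ℝ → u(n)_a^⊥ be of Schwartz class, and let Q, R : ℝ → u(n) be smooth maps such that Q_x + [u, Q] = [R, a] pointwise, Q(x) → 0 as x → −∞, and π_a^⊥(Q) is of Schwartz class. Then P_u(π_a^⊥(Q)) = [R, a]. -/

import Mathlib

open Matrix Filter MeasureTheory
open scoped Classical

attribute [local instance] Matrix.normedAddCommGroup Matrix.normedSpace

/-- A map of `ℝ` into a normed space is of Schwartz class if it is (the underlying function
of) a Schwartz map. -/
def IsSchwartz {E : Type*} [NormedAddCommGroup E] [NormedSpace ℝ E] (f : ℝ → E) : Prop :=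
  ∃ φ : SchwartzMap ℝ E, ⇑φ = f

variable {ι : Type*} [Fintype ι] [DecidableEq ι]

/-- The centralizer `u(n)_a = {y ∈ u(n) : [y,a] = 0}` of `a` in `u(n)`. -/
def uCent (a : Matrix ι ι ℂ) : Set (Matrix ι ι ℂ) :=
  {y | yᴴ = -y ∧ y * a = a * y}

/-- The orthogonal complement `u(n)_a^⊥` of `u(n)_a` in `u(n)` w.r.t. `⟨x,y⟩ = −tr(xy)`. -/
def uPerp (a : Matrix ι ι ℂ) : Set (Matrix ι ι ℂ) :=
  {y | yᴴ = -y ∧ ∀ z ∈ uCent a, -(y * z).trace = 0}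

/-- The orthogonal projection `π_a` of `u(n)` onto `u(n)_a` (for `a` diagonal): it keeps
exactly the entries `(i,j)` with `a i i = a j j`. -/
noncomputable def centProj (a y : Matrix ι ι ℂ) : Matrix ι ι ℂ :=
  Matrix.of fun i j => if a i i = a j j then y i j else 0

/-- The orthogonal projection `π_a^⊥` of `u(n)` onto `u(n)_a^⊥` (for `a` diagonal): it keeps
exactly the entries `(i,j)` with `a i i ≠ a j j`. -/
noncomputable def perpProj (a y : Matrix ι ι ℂ) : Matrix ι ι ℂ :=
  Matrix.of fun i j => if a i i = a j j then 0 else y i j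

/-- The integral operator `T_u(v)(x) = ∫_{−∞}^x π_a([u(y), v(y)]) dy`. -/
noncomputable def Tu (a : Matrix ι ι ℂ) (u v : ℝ → Matrix ι ι ℂ) (x : ℝ) : Matrix ι ι ℂ :=
  ∫ y in Set.Iic x, centProj a (u y * v y - v y * u y)

/-- The Poisson operator `P_u(v) = v_x + π_a^⊥([u,v]) − [u, T_u(v)]`. -/
noncomputable def Pu (a : Matrix ι ι ℂ) (u v : ℝ → Matrix ι ι ℂ) (x : ℝ) : Matrix ι ι ℂ :=
  deriv v x + perpProj a (u x * v x - v x * u x)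
    - (u x * Tu a u v x - Tu a u v x * u x)


set_option linter.unusedSectionVars false

section Aux

lemma trace_y_std (y : Matrix ι ι ℂ) (s t : ι) (c : ℂ) :
    (y * Matrix.single s t c).trace = c * y t s := by
  rw [Matrix.trace_mul_comm, Matrix.trace]
  rw [Finset.sum_eq_single s]
  · simp [Matrix.diag]
  · intro b _ hb
    simp [hb]
  · simp

lemma std_comm_diag (a : Matrix ι ι ℂ) (haDiag : a.IsDiag) (s t : ι) (c : ℂ)
    (hst : a s s = a t t) :
    Matrix.single s t c * a = a * Matrix.single s t c := by
  ext p q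
  rcases eq_or_ne p s with rfl | hp
  · rcases eq_or_ne q t with rfl | hq
    · simp [hst, mul_comm]
    · rw [Matrix.mul_single_apply_of_ne _ _ _ _ _ hq,
        Matrix.single_mul_apply_same]
      rw [haDiag (Ne.symm hq), mul_zero]
  · rcases eq_or_ne q t with rfl | hq
    · rw [Matrix.single_mul_apply_of_ne _ _ _ _ _ hp,
        Matrix.mul_single_apply_same]
      rw [haDiag hp, zero_mul]
    · rw [Matrix.single_mul_apply_of_ne _ _ _ _ _ hp,
        Matrix.mul_single_apply_of_ne _ _ _ _ _ hq]

lemma std_conjT (s t : ι) (c : ℂ) :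
    (Matrix.single s t c)ᴴ = Matrix.single t s (starRingEnd ℂ c) := by
  ext p q
  simp only [Matrix.conjTranspose_apply, Matrix.single, Matrix.of_apply]
  by_cases h1 : t = p <;> by_cases h2 : s = q <;> simp [h1, h2]

lemma std_neg (s t : ι) (c : ℂ) :
    Matrix.single s t (-c) = -Matrix.single s t c := by
  ext p q
  simp only [Matrix.single, Matrix.of_apply, Matrix.neg_apply]
  split <;> simp

lemma uPerp_entry (a : Matrix ι ι ℂ) (haDiag : a.IsDiag) {y : Matrix ι ι ℂ}
    (hy : y ∈ uPerp a) {i j : ι} (hij : a i i = a j j) : y i j = 0 := by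
  obtain ⟨-, hy2⟩ := hy
  have hz1 : (Matrix.single i j Complex.I + Matrix.single j i Complex.I)
      ∈ uCent a := by
    constructor
    · rw [Matrix.conjTranspose_add, std_conjT, std_conjT, Complex.conj_I, std_neg, std_neg]
      abel
    · rw [add_mul, mul_add, std_comm_diag a haDiag i j _ hij,
        std_comm_diag a haDiag j i _ hij.symm]
  have hz2 : (Matrix.single i j (1:ℂ) - Matrix.single j i (1:ℂ))
      ∈ uCent a := by
    constructor
    · rw [Matrix.conjTranspose_sub, std_conjT, std_conjT]
      rw [show (starRingEnd ℂ) 1 = 1 from map_one _]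
      abel
    · rw [sub_mul, mul_sub, std_comm_diag a haDiag i j _ hij,
        std_comm_diag a haDiag j i _ hij.symm]
  have h1 := hy2 _ hz1
  have h2 := hy2 _ hz2
  rw [mul_add, Matrix.trace_add, trace_y_std, trace_y_std] at h1
  rw [mul_sub, Matrix.trace_sub, trace_y_std, trace_y_std] at h2
  have e1 : y j i + y i j = 0 := by
    have hI : Complex.I * (y j i + y i j) = 0 := by linear_combination -h1
    rcases mul_eq_zero.mp hI with h | h
    · exact absurd h Complex.I_ne_zero
    · exact h
  have e2 : y j i - y i j = 0 := by linear_combination -h2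
  linear_combination (e1 - e2) / 2

noncomputable def centProjL (a : Matrix ι ι ℂ) :
    Matrix ι ι ℂ →L[ℝ] Matrix ι ι ℂ :=
  LinearMap.toContinuousLinearMap
    { toFun := centProj a
      map_add' := by
        intro x y; ext i j
        simp only [centProj, Matrix.of_apply, Matrix.add_apply]
        split <;> simp
      map_smul' := by
        intro r x; ext i j
        simp only [centProj, Matrix.of_apply, Matrix.smul_apply, RingHom.id_apply]
        split <;> simp }

noncomputable def perpProjL (a : Matrix ι ι ℂ) :
    Matrix ι ι ℂ →L[ℝ] Matrix ι ι ℂ :=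
  LinearMap.toContinuousLinearMap
    { toFun := perpProj a
      map_add' := by
        intro x y; ext i j
        simp only [perpProj, Matrix.of_apply, Matrix.add_apply]
        split <;> simp
      map_smul' := by
        intro r x; ext i j
        simp only [perpProj, Matrix.of_apply, Matrix.smul_apply, RingHom.id_apply]
        split <;> simp }

@[simp] lemma centProjL_apply (a y : Matrix ι ι ℂ) : centProjL a y = centProj a y := rfl
@[simp] lemma perpProjL_apply (a y : Matrix ι ι ℂ) : perpProjL a y = perpProj a y := rfl

lemma centProj_sub (a X Y : Matrix ι ι ℂ) :
    centProj a (X - Y) = centProj a X - centProj a Y :=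
  map_sub (centProjL a) X Y

lemma centProj_add (a X Y : Matrix ι ι ℂ) :
    centProj a (X + Y) = centProj a X + centProj a Y :=
  map_add (centProjL a) X Y

lemma centProj_add_perpProj (a y : Matrix ι ι ℂ) : centProj a y + perpProj a y = y := by
  ext i j
  simp only [centProj, perpProj, Matrix.add_apply, Matrix.of_apply]
  split <;> simp

lemma centProj_mul_cent_left (a : Matrix ι ι ℂ) {A B : Matrix ι ι ℂ}
    (hA : ∀ i j, a i i = a j j → A i j = 0) (hB : ∀ i j, ¬ a i i = a j j → B i j = 0) :
    centProj a (A * B) = 0 := by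
  ext i j
  simp only [centProj, Matrix.of_apply, Matrix.zero_apply]
  split
  · rename_i h
    rw [Matrix.mul_apply]
    apply Finset.sum_eq_zero
    intro k _
    by_cases hk : a i i = a k k
    · rw [hA i k hk, zero_mul]
    · rw [hB k j (fun hkj => hk (by rw [hkj, ← h])), mul_zero]
  · rfl

lemma centProj_mul_cent_right (a : Matrix ι ι ℂ) {A B : Matrix ι ι ℂ}
    (hA : ∀ i j, a i i = a j j → A i j = 0) (hB : ∀ i j, ¬ a i i = a j j → B i j = 0) :
    centProj a (B * A) = 0 := by
  ext i j
  simp only [centProj, Matrix.of_apply, Matrix.zero_apply]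
  split
  · rename_i h
    rw [Matrix.mul_apply]
    apply Finset.sum_eq_zero
    intro k _
    by_cases hk : a k k = a j j
    · rw [hA k j hk, mul_zero]
    · rw [hB i k (fun hik => hk (by rw [← hik, h])), zero_mul]
  · rfl

lemma centProj_bracket_a (a : Matrix ι ι ℂ) (haDiag : a.IsDiag) (R : Matrix ι ι ℂ) :
    centProj a (R * a - a * R) = 0 := by
  ext i j
  simp only [centProj, Matrix.of_apply, Matrix.zero_apply, Matrix.sub_apply]
  split
  · rename_i h
    have h1 : (R * a) i j = R i j * a j j := by
      rw [Matrix.mul_apply, Finset.sum_eq_single j]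
      · intro k _ hk; rw [haDiag hk, mul_zero]
      · intro hj; exact absurd (Finset.mem_univ j) hj
    have h2 : (a * R) i j = a i i * R i j := by
      rw [Matrix.mul_apply, Finset.sum_eq_single i]
      · intro k _ hk; rw [haDiag (Ne.symm hk), zero_mul]
      · intro hj; exact absurd (Finset.mem_univ i) hj
    rw [h1, h2, h, mul_comm, sub_self]
  · rfl

lemma norm_centProj_le (a A : Matrix ι ι ℂ) : ‖centProj a A‖ ≤ ‖A‖ := by
  rw [Matrix.norm_le_iff (norm_nonneg A)]
  intro i j
  simp only [centProj, Matrix.of_apply]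
  split
  · exact Matrix.norm_entry_le_entrywise_sup_norm A
  · simp

lemma norm_matrix_mul_le (A B : Matrix ι ι ℂ) :
    ‖A * B‖ ≤ (Fintype.card ι : ℝ) * ‖A‖ * ‖B‖ := by
  rw [Matrix.norm_le_iff (by positivity)]
  intro i j
  rw [Matrix.mul_apply]
  calc ‖∑ k, A i k * B k j‖ ≤ ∑ k, ‖A i k * B k j‖ := norm_sum_le _ _
    _ ≤ ∑ _k : ι, ‖A‖ * ‖B‖ := by
        apply Finset.sum_le_sum
        intro k _
        rw [norm_mul]
        exact mul_le_mul (Matrix.norm_entry_le_entrywise_sup_norm A)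
          (Matrix.norm_entry_le_entrywise_sup_norm B) (norm_nonneg _) (norm_nonneg _)
    _ = (Fintype.card ι : ℝ) * ‖A‖ * ‖B‖ := by
        rw [Finset.sum_const, Finset.card_univ, nsmul_eq_mul, mul_assoc]

end Aux

noncomputable instance matCENorm (n : ℕ) : ContinuousENorm (Matrix (Fin n) (Fin n) ℂ) :=
  SeminormedAddGroup.toContinuousENorm

instance matPMS (n : ℕ) : TopologicalSpace.PseudoMetrizableSpace (Matrix (Fin n) (Fin n) ℂ) :=
  inferInstanceAs (TopologicalSpace.PseudoMetrizableSpace (Fin n → Fin n → ℂ))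

/-- Poisson operator and the AKNS recursion: for `a ∈ u(n)` diagonal,
`u : ℝ → u(n)_a^⊥` of Schwartz class, and smooth `Q, R : ℝ → u(n)` with
`Q_x + [u,Q] = [R,a]`, `Q → 0` at `−∞` and `π_a^⊥(Q)` of Schwartz class, one has
`P_u(π_a^⊥(Q)) = [R, a]`. -/

theorem stmt12 (n : ℕ)
    (a : Matrix (Fin n) (Fin n) ℂ) (haDiag : a.IsDiag) (haSkew : aᴴ = -a)
    (u : ℝ → Matrix (Fin n) (Fin n) ℂ)
    (huS : IsSchwartz u) (huP : ∀ x, u x ∈ uPerp a)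
    (Q R : ℝ → Matrix (Fin n) (Fin n) ℂ)
    (hQ : ContDiff ℝ (⊤ : ℕ∞) Q) (hR : ContDiff ℝ (⊤ : ℕ∞) R)
    (hQu : ∀ x, (Q x)ᴴ = -(Q x)) (hRu : ∀ x, (R x)ᴴ = -(R x))
    (hrec : ∀ x, deriv Q x + (u x * Q x - Q x * u x) = R x * a - a * R x)
    (hQlim : Tendsto Q atBot (nhds 0))
    (hQS : IsSchwartz (fun x => perpProj a (Q x))) :
    ∀ x, Pu a u (fun y => perpProj a (Q y)) x = R x * a - a * R x := by
  intro x
  obtain ⟨φ, hφ⟩ := huS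
  obtain ⟨ψ, hψ⟩ := hQS
  set v : ℝ → Matrix (Fin n) (Fin n) ℂ := fun y => perpProj a (Q y) with hvdef
  set w : ℝ → Matrix (Fin n) (Fin n) ℂ := fun y => centProj a (Q y) with hwdef
  have hu0 : ∀ t, ∀ i j : Fin n, a i i = a j j → u t i j = 0 :=
    fun t i j h => uPerp_entry a haDiag (huP t) h
  have hw0 : ∀ t, ∀ i j : Fin n, ¬ a i i = a j j → w t i j = 0 := by
    intro t i j h
    simp only [hwdef, centProj, Matrix.of_apply, if_neg h]
  have hQd : ∀ t, HasDerivAt Q (deriv Q t) t :=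
    fun t => ((hQ.differentiable (by simp)) t).hasDerivAt
  have hderivQ : ∀ t, deriv Q t = (R t * a - a * R t) - (u t * Q t - Q t * u t) :=
    fun t => eq_sub_of_add_eq (hrec t)
  have hQsum : ∀ t, Q t = w t + v t := fun t => (centProj_add_perpProj a (Q t)).symm
  have hcw : ∀ t, centProj a (u t * w t - w t * u t) = 0 := by
    intro t
    rw [centProj_sub, centProj_mul_cent_left a (hu0 t) (hw0 t),
      centProj_mul_cent_right a (hu0 t) (hw0 t), sub_zero]
  have hcQ : ∀ t, centProj a (deriv Q t) = -(centProj a (u t * v t - v t * u t)) := by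
    intro t
    have hbr : u t * Q t - Q t * u t
        = (u t * w t - w t * u t) + (u t * v t - v t * u t) := by
      rw [hQsum t]; noncomm_ring
    rw [hderivQ t, hbr, centProj_sub, centProj_add, centProj_bracket_a a haDiag,
      hcw t, zero_add, zero_sub]
  have hwd : ∀ t, HasDerivAt w (-(centProj a (u t * v t - v t * u t))) t := by
    intro t
    have h := (centProjL a).hasFDerivAt.comp_hasDerivAt t (hQd t)
    change HasDerivAt w (centProj a (deriv Q t)) t at h
    rw [hcQ t] at h
    exact h
  -- continuity and integrability of the integrand of `Tu`
  have hucont : Continuous u := hφ ▸ φ.continuous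
  have hvcont : Continuous v := hψ ▸ ψ.continuous
  have hgcont : Continuous (fun y => centProj a (u y * v y - v y * u y)) :=
    (centProjL a).continuous.comp ((hucont.matrix_mul hvcont).sub (hvcont.matrix_mul hucont))
  obtain ⟨C, hC0, hC⟩ := φ.decay 0 0
  have hCu : ∀ t, ‖u t‖ ≤ C := by
    intro t
    have := hC t
    simp only [pow_zero, one_mul, norm_iteratedFDeriv_zero] at this
    rw [hφ] at this
    exact this
  have hbound : ∀ y, ‖centProj a (u y * v y - v y * u y)‖ ≤ (2 * n * C) * ‖v y‖ := by
    intro y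
    have h1 := (norm_centProj_le a (u y * v y - v y * u y)).trans
      (norm_sub_le (u y * v y) (v y * u y))
    have h3 := norm_matrix_mul_le (u y) (v y)
    have h4 := norm_matrix_mul_le (v y) (u y)
    rw [Fintype.card_fin] at h3 h4
    calc ‖centProj a (u y * v y - v y * u y)‖
        ≤ ‖u y * v y‖ + ‖v y * u y‖ := h1
      _ ≤ (n:ℝ) * ‖u y‖ * ‖v y‖ + (n:ℝ) * ‖v y‖ * ‖u y‖ := add_le_add h3 h4
      _ ≤ (n:ℝ) * C * ‖v y‖ + (n:ℝ) * ‖v y‖ * C := by gcongr <;> exact hCu y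
      _ = (2 * n * C) * ‖v y‖ := by ring
  have hint : Integrable (fun y => (2 * n * C) * ‖v y‖) volume :=
    hψ ▸ (ψ.integrable.norm.const_mul ((2 : ℝ) * n * C))
  have hgint : IntegrableOn (fun y => centProj a (u y * v y - v y * u y))
      (Set.Iic x) volume := by
    apply Integrable.mono' hint.integrableOn
    · exact hgcont.aestronglyMeasurable.restrict
    · exact ae_of_all _ hbound
  -- fundamental theorem of calculus on `(-∞, x]`
  have hlim : Tendsto (fun t => -(w t)) atBot (nhds 0) := by
    have h0 : Tendsto w atBot (nhds (centProjL a 0)) :=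
      ((centProjL a).continuous.tendsto 0).comp hQlim
    rw [map_zero] at h0
    simpa using h0.neg
  have hFTC := integral_Iic_of_hasDerivAt_of_tendsto'
    (f := fun s => -(w s)) (f' := fun y => centProj a (u y * v y - v y * u y)) (a := x)
    (fun t _ => by have h := (hwd t).neg; rw [neg_neg] at h; exact h) hgint hlim
  have hT : Tu a u v x = -(w x) := by
    show (∫ y in Set.Iic x, centProj a (u y * v y - v y * u y)) = -(w x)
    rw [hFTC, sub_zero]
  -- derivative of `v`
  have hvd : HasDerivAt v (perpProj a (deriv Q x)) x := by
    have h := (perpProjL a).hasFDerivAt.comp_hasDerivAt x (hQd x)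
    exact h
  have hperp : perpProj a (deriv Q x)
      = deriv Q x + centProj a (u x * v x - v x * u x) := by
    have h : perpProj a (deriv Q x) = deriv Q x - centProj a (deriv Q x) :=
      eq_sub_of_add_eq' (centProj_add_perpProj a (deriv Q x))
    rw [h, hcQ x, sub_neg_eq_add]
  -- final assembly
  show deriv v x + perpProj a (u x * v x - v x * u x)
      - (u x * Tu a u v x - Tu a u v x * u x) = R x * a - a * R x
  rw [(show deriv v x = perpProj a (deriv Q x) from hvd.deriv), hperp, hT, ← hrec x, add_assoc,
    centProj_add_perpProj a (u x * v x - v x * u x), hQsum x]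
  noncomm_ring
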